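/- Comparison inequality: for a finite graph G, if q'≥q, q'≥1 and p'≤p, then the random-cluster measure φ_{p',q'} is stochastically smaller than φ_{p,q}, i.e. φ_{p',q'}(f) ≤ φ_{p,q}(f) for every increasing function f on {0,1}^E. -/

import Mathlib

open scoped BigOperators Classical

noncomputable section

/-- Number of connected components (including isolated vertices) of the graph `(V, A)`. -/
def numComp {V : Type} [Fintype V] (A : Finset (Sym2 V)) : ℕ :=
  Nat.card (SimpleGraph.fromEdgeSet (A : Set (Sym2 V))).ConnectedComponent

/-- Random-cluster weight of the configuration with open edge-set `A ⊆ E`. -/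
def rcWeight {V : Type} [Fintype V] (E : Finset (Sym2 V)) (p q : ℝ)
    (A : Finset (Sym2 V)) : ℝ :=
  p ^ A.card * (1 - p) ^ (E.card - A.card) * q ^ numComp A

/-- Random-cluster partition function. -/
def ZRC {V : Type} [Fintype V] (E : Finset (Sym2 V)) (p q : ℝ) : ℝ :=
  ∑ A ∈ E.powerset, rcWeight E p q A

/-- Potts weight `exp(β · #{monochromatic edges})` of a spin configuration `σ`. -/
def pottsWeight {V : Type} [Fintype V] [DecidableEq V] (E : Finset (Sym2 V)) (β : ℝ) (q : ℕ)
    (σ : V → Fin q) : ℝ :=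
  Real.exp (β * ((E.filter (fun e => (e.map σ).IsDiag)).card : ℝ))

/-- Potts partition function. -/
def ZP {V : Type} [Fintype V] [DecidableEq V] (E : Finset (Sym2 V)) (β : ℝ) (q : ℕ) : ℝ :=
  ∑ σ : V → Fin q, pottsWeight E β q σ

/-- The event `F`: the spin configuration `σ` is constant on every open edge of `A`. -/
def consistent {V : Type} (q : ℕ) (σ : V → Fin q) (A : Finset (Sym2 V)) : Prop :=
  ∀ e ∈ A, (e.map σ).IsDiag

/-- Weight of the Potts/random-cluster coupling measure `μ(σ, ω) ∝ ψ(σ) φ_p(ω) 1_F(σ,ω)`. -/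
def muWeight {V : Type} [Fintype V] (E : Finset (Sym2 V)) (p : ℝ) (q : ℕ)
    (σ : V → Fin q) (A : Finset (Sym2 V)) : ℝ :=
  ((q : ℝ) ^ Fintype.card V)⁻¹ * (p ^ A.card * (1 - p) ^ (E.card - A.card)) *
    (if consistent q σ A then 1 else 0)

/-- Normalising constant of the coupling measure. -/
def Zmu {V : Type} [Fintype V] [DecidableEq V] (E : Finset (Sym2 V)) (p : ℝ) (q : ℕ) : ℝ :=
  ∑ σ : V → Fin q, ∑ A ∈ E.powerset, muWeight E p q σ A

/-- Expectation of `f` under the random-cluster measure `φ_{p,q}`. -/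
def rcExp {V : Type} [Fintype V] (E : Finset (Sym2 V)) (p q : ℝ)
    (f : Finset (Sym2 V) → ℝ) : ℝ :=
  (∑ A ∈ E.powerset, rcWeight E p q A * f A) / ZRC E p q


/-! ### Auxiliary lemmas -/

section AuxGraph

open SimpleGraph

variable {V : Type} {G : SimpleGraph V} {u v x y : V}

lemma aux_reach_sup_edge (h : (G ⊔ SimpleGraph.edge u v).Reachable x y) :
    G.Reachable x y ∨ (G.Reachable x u ∧ G.Reachable v y) ∨
      (G.Reachable x v ∧ G.Reachable u y) := by
  obtain ⟨w⟩ := h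
  induction w with
  | nil => exact Or.inl (Reachable.refl _)
  | @cons a b c hadj p ih =>
    rcases hadj with hG | hE
    · have r : G.Reachable a b := hG.reachable
      rcases ih with h1 | ⟨h1, h2⟩ | ⟨h1, h2⟩
      · exact Or.inl (r.trans h1)
      · exact Or.inr (Or.inl ⟨r.trans h1, h2⟩)
      · exact Or.inr (Or.inr ⟨r.trans h1, h2⟩)
    · rw [SimpleGraph.edge_adj] at hE
      obtain ⟨⟨rfl, rfl⟩ | ⟨rfl, rfl⟩, hne⟩ := hE
      · rcases ih with h1 | ⟨h1, h2⟩ | ⟨h1, h2⟩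
        · exact Or.inr (Or.inl ⟨Reachable.refl _, h1⟩)
        · exact Or.inl (h1.symm.trans h2)
        · exact Or.inl h2
      · rcases ih with h1 | ⟨h1, h2⟩ | ⟨h1, h2⟩
        · exact Or.inr (Or.inr ⟨Reachable.refl _, h1⟩)
        · exact Or.inl h2
        · exact Or.inl (h1.symm.trans h2)

lemma aux_cc_map_mk {G G' : SimpleGraph V} (h : G ≤ G') (x : V) :
    (G.connectedComponentMk x).map (SimpleGraph.Hom.ofLE h) =
      G'.connectedComponentMk x := rfl

lemma aux_cc_map_surjective {G G' : SimpleGraph V} (h : G ≤ G') :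
    Function.Surjective (ConnectedComponent.map (SimpleGraph.Hom.ofLE h)) := by
  intro c
  obtain ⟨a, rfl⟩ := Quot.exists_rep c
  exact ⟨G.connectedComponentMk a, rfl⟩

lemma aux_card_cc_mono [Fintype V] {G G' : SimpleGraph V} (h : G ≤ G') :
    Nat.card G'.ConnectedComponent ≤ Nat.card G.ConnectedComponent :=
  Nat.card_le_card_of_surjective _ (aux_cc_map_surjective h)

lemma aux_card_cc_sup_edge_reachable [Fintype V] (h : G.Reachable u v) :
    Nat.card (G ⊔ SimpleGraph.edge u v).ConnectedComponent =
      Nat.card G.ConnectedComponent := by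
  have hle : G ≤ G ⊔ SimpleGraph.edge u v := le_sup_left
  refine (Nat.card_eq_of_bijective _ ⟨?_, aux_cc_map_surjective hle⟩).symm
  rintro x y hxy
  obtain ⟨a, rfl⟩ := Quot.exists_rep x
  obtain ⟨b, rfl⟩ := Quot.exists_rep y
  have : (G ⊔ SimpleGraph.edge u v).Reachable a b := ConnectedComponent.eq.mp hxy
  refine ConnectedComponent.eq.mpr ?_
  rcases aux_reach_sup_edge this with h1 | ⟨h1, h2⟩ | ⟨h1, h2⟩
  · exact h1
  · exact (h1.trans (h.trans h2))
  · exact (h1.trans (h.symm.trans h2))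

lemma aux_card_cc_sup_edge_not_reachable [Fintype V] (h : ¬ G.Reachable u v) :
    Nat.card (G ⊔ SimpleGraph.edge u v).ConnectedComponent + 1 =
      Nat.card G.ConnectedComponent := by
  set G' := G ⊔ SimpleGraph.edge u v with hG'
  have hne : u ≠ v := fun e => h (e ▸ Reachable.refl u)
  have hle : G ≤ G' := le_sup_left
  let f : {x : G.ConnectedComponent // ¬ x = G.connectedComponentMk v} → G'.ConnectedComponent :=
    fun x => x.1.map (SimpleGraph.Hom.ofLE hle)
  have hbij : Function.Bijective f := by
    constructor
    · rintro ⟨x, hx⟩ ⟨y, hy⟩ hxy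
      obtain ⟨a, rfl⟩ := Quot.exists_rep x
      obtain ⟨b, rfl⟩ := Quot.exists_rep y
      have hav : ¬ G.Reachable a v := fun r => hx (ConnectedComponent.eq.mpr r)
      have hbv : ¬ G.Reachable b v := fun r => hy (ConnectedComponent.eq.mpr r)
      simp only [f] at hxy
      have hR : G'.Reachable a b := ConnectedComponent.eq.mp hxy
      refine Subtype.ext (ConnectedComponent.eq.mpr ?_)
      rcases aux_reach_sup_edge hR with h1 | ⟨h1, h2⟩ | ⟨h1, h2⟩
      · exact h1
      · exact absurd h2.symm hbv
      · exact absurd h1 hav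
    · intro c
      obtain ⟨a, rfl⟩ := Quot.exists_rep c
      by_cases hav : G.Reachable a v
      · refine ⟨⟨G.connectedComponentMk u, fun e => h (ConnectedComponent.eq.mp e)⟩, ?_⟩
        refine ConnectedComponent.eq.mpr ?_
        have hadj : G'.Adj u v := by
          refine Or.inr ?_
          rw [SimpleGraph.edge_adj]
          exact ⟨Or.inl ⟨rfl, rfl⟩, hne⟩
        exact hadj.reachable.trans (hav.mono hle).symm
      · exact ⟨⟨G.connectedComponentMk a, fun e => hav (ConnectedComponent.eq.mp e)⟩,
          aux_cc_map_mk hle a⟩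
  have hcard : Nat.card G'.ConnectedComponent =
      Nat.card {x : G.ConnectedComponent // ¬ x = G.connectedComponentMk v} :=
    (Nat.card_eq_of_bijective _ hbij).symm
  letI : Fintype G.ConnectedComponent := Fintype.ofFinite _
  rw [hcard, Nat.card_eq_fintype_card, Nat.card_eq_fintype_card,
    Fintype.card_subtype_compl, Fintype.card_subtype_eq]
  have : 0 < Fintype.card G.ConnectedComponent :=
    Fintype.card_pos_iff.mpr ⟨G.connectedComponentMk v⟩
  omega

end AuxGraph

section AuxNumComp

variable {V : Type} [Fintype V]

lemma aux_numComp_mono {A B : Finset (Sym2 V)} (h : A ⊆ B) : numComp B ≤ numComp A :=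
  aux_card_cc_mono (SimpleGraph.fromEdgeSet_mono (by exact_mod_cast h))

lemma aux_fromEdgeSet_insert_eq [DecidableEq V] (u v : V) (A : Finset (Sym2 V)) :
    SimpleGraph.fromEdgeSet ((insert s(u, v) A : Finset (Sym2 V)) : Set (Sym2 V)) =
      SimpleGraph.fromEdgeSet (A : Set (Sym2 V)) ⊔ SimpleGraph.edge u v := by
  rw [Finset.coe_insert, Set.insert_eq, SimpleGraph.fromEdgeSet_union, sup_comm]
  rfl

lemma aux_numComp_insert_submodular [DecidableEq V] {A B : Finset (Sym2 V)} (hAB : A ⊆ B) (e : Sym2 V) :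
    numComp (insert e A) + numComp B ≤ numComp A + numComp (insert e B) := by
  induction e with
  | _ u v =>
    have hle : SimpleGraph.fromEdgeSet (A : Set (Sym2 V)) ≤
        SimpleGraph.fromEdgeSet (B : Set (Sym2 V)) :=
      SimpleGraph.fromEdgeSet_mono (by exact_mod_cast hAB)
    unfold numComp
    rw [aux_fromEdgeSet_insert_eq, aux_fromEdgeSet_insert_eq]
    by_cases hA : (SimpleGraph.fromEdgeSet (A : Set (Sym2 V))).Reachable u v
    · rw [aux_card_cc_sup_edge_reachable hA, aux_card_cc_sup_edge_reachable (hA.mono hle)]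
    · have h1 := aux_card_cc_sup_edge_not_reachable
        (G := SimpleGraph.fromEdgeSet (A : Set (Sym2 V))) (u := u) (v := v) hA
      by_cases hB : (SimpleGraph.fromEdgeSet (B : Set (Sym2 V))).Reachable u v
      · rw [aux_card_cc_sup_edge_reachable hB]; omega
      · have h2 := aux_card_cc_sup_edge_not_reachable
          (G := SimpleGraph.fromEdgeSet (B : Set (Sym2 V))) (u := u) (v := v) hB
        omega

lemma aux_numComp_supermodular [DecidableEq V] (A B : Finset (Sym2 V)) :
    numComp A + numComp B ≤ numComp (A ∩ B) + numComp (A ∪ B) := by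
  generalize hn : (B \ A).card = n
  induction n generalizing B with
  | zero =>
    have hBA : B ⊆ A := by
      rw [Finset.card_eq_zero, Finset.sdiff_eq_empty_iff_subset] at hn
      exact hn
    rw [Finset.inter_eq_right.mpr hBA, Finset.union_eq_left.mpr hBA, Nat.add_comm]
  | succ n ih =>
    have hne : (B \ A).Nonempty := by
      rw [← Finset.card_pos, hn]; omega
    obtain ⟨e, he⟩ := hne
    rw [Finset.mem_sdiff] at he
    set B₀ := B.erase e with hB₀
    have heB : e ∈ B := he.1
    have hBi : B = insert e B₀ := (Finset.insert_erase heB).symm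
    have hcard : (B₀ \ A).card = n := by
      have : B₀ \ A = (B \ A).erase e := by
        ext x; simp [hB₀, Finset.mem_sdiff, Finset.mem_erase, and_comm, and_left_comm, and_assoc]
      rw [this, Finset.card_erase_of_mem (Finset.mem_sdiff.mpr he), hn]
      omega
    have ih₀ := ih B₀ hcard
    have hsub : B₀ ⊆ A ∪ B₀ := Finset.subset_union_right
    have hdim := aux_numComp_insert_submodular hsub e
    have hIB : A ∩ B = A ∩ B₀ := by
      ext x; simp only [Finset.mem_inter, hB₀, Finset.mem_erase]
      exact ⟨fun ⟨h1, h2⟩ => ⟨h1, fun hx => he.2 (hx ▸ h1), h2⟩, fun ⟨h1, h2⟩ => ⟨h1, h2.2⟩⟩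
    have hUB : A ∪ B = insert e (A ∪ B₀) := by
      rw [hBi, Finset.union_insert]
    rw [hIB, hUB, hBi]
    omega

end AuxNumComp

section AuxKey

lemma aux_pow_key {p p' q q' : ℝ}
    (hp0 : 0 < p) (hp1 : p < 1) (hp'0 : 0 < p') (hp'1 : p' < 1)
    (hq : 0 < q) (hqq : q ≤ q') (hq1 : 1 ≤ q') (hpp : p' ≤ p)
    (a b i u sa sb si su kA kB kI kU : ℕ)
    (h1 : i + u = a + b) (h2 : i ≤ a) (h3 : a + sa = i + si) (h4 : b + sb = u + su)
    (hkA : kA ≤ kI) (hkU : kU ≤ kB) (hsup : kA + kB ≤ kI + kU) :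
    p' ^ a * (1 - p') ^ sa * q' ^ kA * (p ^ b * (1 - p) ^ sb * q ^ kB) ≤
      p' ^ i * (1 - p') ^ si * q' ^ kI * (p ^ u * (1 - p) ^ su * q ^ kU) := by
  have h1p : (0:ℝ) < 1 - p := by linarith
  have h1p' : (0:ℝ) < 1 - p' := by linarith
  obtain ⟨d, rfl⟩ : ∃ d, a = i + d := ⟨a - i, by omega⟩
  have hu : u = b + d := by omega
  subst hu
  have hsi : si = sa + d := by omega
  subst hsi
  have hsb : sb = su + d := by omega
  subst hsb
  obtain ⟨a', rfl⟩ : ∃ a', kI = kA + a' := ⟨kI - kA, by omega⟩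
  obtain ⟨b', rfl⟩ : ∃ b', kB = kU + b' := ⟨kB - kU, by omega⟩
  have hab' : b' ≤ a' := by omega
  have hcore : (p' * (1 - p)) ^ d * q ^ b' ≤ (p * (1 - p')) ^ d * q' ^ a' := by
    have c1 : (p' * (1 - p)) ^ d ≤ (p * (1 - p')) ^ d := by
      apply pow_le_pow_left₀ (by positivity)
      nlinarith
    have c2 : q ^ b' ≤ q' ^ a' := by
      calc q ^ b' ≤ q' ^ b' := pow_le_pow_left₀ hq.le hqq b'
        _ ≤ q' ^ a' := pow_le_pow_right₀ hq1 hab'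
    exact mul_le_mul c1 c2 (by positivity) (by positivity)
  have hC : (0:ℝ) ≤ p' ^ i * (1 - p') ^ sa * q' ^ kA * (p ^ b * (1 - p) ^ su * q ^ kU) := by
    positivity
  calc p' ^ (i + d) * (1 - p') ^ sa * q' ^ kA * (p ^ b * (1 - p) ^ (su + d) * q ^ (kU + b'))
      = (p' ^ i * (1 - p') ^ sa * q' ^ kA * (p ^ b * (1 - p) ^ su * q ^ kU)) *
        ((p' * (1 - p)) ^ d * q ^ b') := by
        rw [pow_add, pow_add, pow_add, mul_pow]; ring
    _ ≤ (p' ^ i * (1 - p') ^ sa * q' ^ kA * (p ^ b * (1 - p) ^ su * q ^ kU)) *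
        ((p * (1 - p')) ^ d * q' ^ a') := by
        exact mul_le_mul_of_nonneg_left hcore hC
    _ = p' ^ i * (1 - p') ^ (sa + d) * q' ^ (kA + a') * (p ^ (b + d) * (1 - p) ^ su * q ^ kU) := by
        rw [pow_add, pow_add, pow_add, mul_pow]; ring

lemma aux_rc_key {V : Type} [Fintype V] [DecidableEq V] {E : Finset (Sym2 V)} {p p' q q' : ℝ}
    (hp0 : 0 < p) (hp1 : p < 1) (hp'0 : 0 < p') (hp'1 : p' < 1)
    (hq : 0 < q) (hqq : q ≤ q') (hq1 : 1 ≤ q') (hpp : p' ≤ p)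
    {A B : Finset (Sym2 V)} (hA : A ⊆ E) (hB : B ⊆ E) :
    rcWeight E p' q' A * rcWeight E p q B ≤
      rcWeight E p' q' (A ∩ B) * rcWeight E p q (A ∪ B) := by
  have hiu : (A ∩ B).card + (A ∪ B).card = A.card + B.card :=
    Finset.card_inter_add_card_union A B
  have hia : (A ∩ B).card ≤ A.card := Finset.card_le_card Finset.inter_subset_left
  have haE : A.card ≤ E.card := Finset.card_le_card hA
  have huE : (A ∪ B).card ≤ E.card := Finset.card_le_card (Finset.union_subset hA hB)
  have hbE : B.card ≤ E.card := Finset.card_le_card hB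
  have hbu : B.card ≤ (A ∪ B).card := Finset.card_le_card Finset.subset_union_right
  exact aux_pow_key hp0 hp1 hp'0 hp'1 hq hqq hq1 hpp
    A.card B.card (A ∩ B).card (A ∪ B).card
    (E.card - A.card) (E.card - B.card) (E.card - (A ∩ B).card) (E.card - (A ∪ B).card)
    (numComp A) (numComp B) (numComp (A ∩ B)) (numComp (A ∪ B))
    (by omega) hia (by omega) (by omega)
    (aux_numComp_mono Finset.inter_subset_left) (aux_numComp_mono Finset.subset_union_right)
    (aux_numComp_supermodular A B)

end AuxKey

/-- Comparison inequality: if `q' ≥ q`, `q' ≥ 1` and `p' ≤ p`, then `φ_{p',q'}` is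
stochastically smaller than `φ_{p,q}`. -/
theorem rc_comparison_le {V : Type} [Fintype V] [DecidableEq V]
    (E : Finset (Sym2 V)) (hE : ∀ e ∈ E, ¬ e.IsDiag)
    (p p' q q' : ℝ) (hp : p ∈ Set.Ioo (0 : ℝ) 1) (hp' : p' ∈ Set.Ioo (0 : ℝ) 1)
    (hq : 0 < q) (hqq : q ≤ q') (hq1 : 1 ≤ q') (hpp : p' ≤ p)
    (f : Finset (Sym2 V) → ℝ)
    (hf : ∀ A B : Finset (Sym2 V), A ⊆ B → B ⊆ E → f A ≤ f B) :
    rcExp E p' q' f ≤ rcExp E p q f := by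
  classical
  obtain ⟨hp0, hp1⟩ := hp
  obtain ⟨hp'0, hp'1⟩ := hp'
  have h1p : (0:ℝ) < 1 - p := by linarith
  have h1p' : (0:ℝ) < 1 - p' := by linarith
  have hq' : (0:ℝ) < q' := by linarith
  -- positivity of weights and partition functions
  have hw : ∀ A : Finset (Sym2 V), 0 < rcWeight E p q A := by
    intro A; unfold rcWeight; positivity
  have hw' : ∀ A : Finset (Sym2 V), 0 < rcWeight E p' q' A := by
    intro A; unfold rcWeight; positivity
  have hZ : 0 < ZRC E p q :=
    Finset.sum_pos (fun A _ => hw A) ⟨∅, Finset.empty_mem_powerset E⟩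
  have hZ' : 0 < ZRC E p' q' :=
    Finset.sum_pos (fun A _ => hw' A) ⟨∅, Finset.empty_mem_powerset E⟩
  -- the lattice of subsets of `E`, as finsets over a subtype
  set ι : Finset {e : Sym2 V // e ∈ E} → Finset (Sym2 V) :=
    fun s => s.map (Function.Embedding.subtype _) with hι
  have hιsub : ∀ s, ι s ⊆ E := by
    intro s e he
    simp only [hι, Finset.mem_map, Function.Embedding.coe_subtype] at he
    obtain ⟨⟨e', he'⟩, _, rfl⟩ := he
    exact he'
  have hιinf : ∀ s t, ι (s ⊓ t) = ι s ∩ ι t := fun s t => Finset.map_inter s t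
  have hιsup : ∀ s t, ι (s ⊔ t) = ι s ∪ ι t := fun s t => Finset.map_union s t
  have hconv : ∀ g : Finset (Sym2 V) → ℝ,
      ∑ s : Finset {e : Sym2 V // e ∈ E}, g (ι s) = ∑ A ∈ E.powerset, g A := by
    intro g
    refine Finset.sum_bij (fun s _ => ι s) ?_ ?_ ?_ ?_
    · intro s _; exact Finset.mem_powerset.mpr (hιsub s)
    · intro s _ t _ h
      exact Finset.map_injective _ h
    · intro A hA
      refine ⟨A.subtype (· ∈ E), Finset.mem_univ _, ?_⟩
      show Finset.map (Function.Embedding.subtype _) (A.subtype (· ∈ E)) = A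
      rw [Finset.subtype_map, Finset.filter_true_of_mem]
      intro x hx
      exact Finset.mem_powerset.mp hA hx
    · intro s _; rfl
  -- set up Holley's inequality
  set μ : Finset {e : Sym2 V // e ∈ E} → ℝ := fun s => f (ι s) - f ∅ with hμ
  set F : Finset {e : Sym2 V // e ∈ E} → ℝ :=
    fun s => rcWeight E p' q' (ι s) / ZRC E p' q' with hF
  set G : Finset {e : Sym2 V // e ∈ E} → ℝ :=
    fun s => rcWeight E p q (ι s) / ZRC E p q with hG
  have hμ0 : 0 ≤ μ := by
    intro s
    simp only [hμ, Pi.zero_apply, sub_nonneg]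
    exact hf ∅ (ι s) (Finset.empty_subset _) (hιsub s)
  have hF0 : 0 ≤ F := fun s => div_nonneg (hw' _).le hZ'.le
  have hG0 : 0 ≤ G := fun s => div_nonneg (hw _).le hZ.le
  have hμmono : Monotone μ := by
    intro s t hst
    simp only [hμ, sub_le_sub_iff_right]
    exact hf (ι s) (ι t) (Finset.map_subset_map.mpr hst) (hιsub t)
  have hFG : ∑ s, F s = ∑ s, G s := by
    simp only [hF, hG]
    rw [← Finset.sum_div, ← Finset.sum_div, hconv (rcWeight E p' q'), hconv (rcWeight E p q)]
    show ZRC E p' q' / ZRC E p' q' = ZRC E p q / ZRC E p q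
    rw [div_self hZ'.ne', div_self hZ.ne']
  have hHol : ∀ a b, F a * G b ≤ F (a ⊓ b) * G (a ⊔ b) := by
    intro a b
    simp only [hF, hG, div_mul_div_comm]
    rw [hιinf, hιsup]
    apply div_le_div_of_nonneg_right ?_ (by positivity)
    exact aux_rc_key hp0 hp1 hp'0 hp'1 hq hqq hq1 hpp (hιsub a) (hιsub b)
  have hH := holley F G μ hμ0 hF0 hG0 hμmono hFG hHol
  -- rewrite both sides of Holley's conclusion as expectations
  have hexp : ∀ (P Q : ℝ) (hQ : 0 < Q) (w : Finset (Sym2 V) → ℝ)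
      (hw : ∑ A ∈ E.powerset, w A = Q),
      ∑ s : Finset {e : Sym2 V // e ∈ E}, μ s * (w (ι s) / Q) =
        (∑ A ∈ E.powerset, w A * f A) / Q - f ∅ := by
    intro P Q hQ w hwQ
    have : ∀ s : Finset {e : Sym2 V // e ∈ E},
        μ s * (w (ι s) / Q) = ((fun A => (f A - f ∅) * w A) (ι s)) / Q := by
      intro s; simp only [hμ]; ring
    rw [Finset.sum_congr rfl (fun s _ => this s), ← Finset.sum_div,
      hconv (fun A => (f A - f ∅) * w A)]
    have h2 : ∑ A ∈ E.powerset, (f A - f ∅) * w A =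
        (∑ A ∈ E.powerset, w A * f A) - f ∅ * ∑ A ∈ E.powerset, w A := by
      rw [Finset.mul_sum, ← Finset.sum_sub_distrib]
      exact Finset.sum_congr rfl (fun A _ => by ring)
    rw [h2, hwQ, sub_div, mul_div_assoc, div_self hQ.ne']
    ring
  have hL := hexp 0 (ZRC E p' q') hZ' (rcWeight E p' q') rfl
  have hR := hexp 0 (ZRC E p q) hZ (rcWeight E p q) rfl
  simp only [hF] at hH
  rw [hL] at hH
  simp only [hG] at hH
  rw [hR] at hH
  unfold rcExp
  linarith
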